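/- Let m and p be positive integers, l = 4mp + 2p + 1 and t = 4mp + 1, so that p' = (2m+1)p. Then: (i) for 1 ≤ k ≤ p', σ_{i_k} + σ_{i_{p'+1−k}} = 2 if ip + 1 ≤ k ≤ (i+1)p for some i ∈ {0, 2, …, 2m}, and σ_{i_k} + σ_{i_{p'+1−k}} = −2 if ip + 1 ≤ k ≤ (i+1)p for some i ∈ {1, 3, …, 2m−1}. (ii) For 1 ≤ j ≤ p' − 1, σ_{j+1} + σ_{p'+1−j} = 2 if j ≡ 0 (mod 2m+1), and σ_{j+1} + σ_{p'+1−j} = 0 otherwise. -/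
import Mathlib


/-- `σ_j = (-1)^{⌊(2j-1)t/l⌋}`. -/
def sigmaF (l t j : ℕ) : ℤ := (-1) ^ ((2 * j - 1) * t / l)

/-- `r(j)`: the unique integer with `r(j) ≡ (2j-1)t (mod 2l)` and `-l < r(j) < l`. -/
def rF (l t j : ℕ) : ℤ :=
  if (((2 * j - 1) * t : ℕ) : ℤ) % (2 * l) < l then (((2 * j - 1) * t : ℕ) : ℤ) % (2 * l)
  else (((2 * j - 1) * t : ℕ) : ℤ) % (2 * l) - 2 * l

/-- `r'(j) = (|r(j)| + 1)/2`. -/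
def rpF (l t j : ℕ) : ℤ := (|rF l t j| + 1) / 2

lemma divHelperX (l t j E R : ℕ) (hl : 0 < l) (hR : R < l)
    (heq : (2*j-1)*t = R + l*E) : (2 * j - 1) * t / l = E := by
  rw [heq, Nat.add_mul_div_left _ _ hl, Nat.div_eq_of_lt hR, Nat.zero_add]

lemma sigmaHelperX (l t j E R : ℕ) (hl : 0 < l) (hR : R < l)
    (heq : (2*j-1)*t = R + l*E) : sigmaF l t j = (-1)^E := by
  unfold sigmaF; rw [divHelperX l t j E R hl hR heq]

lemma emodHelperX (l t j E R : ℕ) (hl : 0 < l) (hR : R < l)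
    (heq : (2*j-1)*t = R + l*E) :
    (((2 * j - 1) * t : ℕ) : ℤ) % (2*l) = (R : ℤ) + l * ((E % 2 : ℕ) : ℤ) := by
  obtain ⟨c, r, hE, hr⟩ : ∃ c r, E = 2*c + r ∧ r < 2 := ⟨E/2, E%2, by omega, by omega⟩
  have hrE : E % 2 = r := by omega
  have hc : (((2 * j - 1) * t : ℕ) : ℤ) = ((R:ℤ) + l*r) + (2*l) * c := by
    push_cast [heq, hE]; ring
  rw [hc, Int.add_mul_emod_self_left, hrE]
  have h0 : (0:ℤ) ≤ (R:ℤ) + l*r := by positivity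
  have h1 : (R:ℤ) + l*r < 2*l := by
    have : (r : ℤ) ≤ 1 := by omega
    have hRl : (R:ℤ) < l := by exact_mod_cast hR
    nlinarith [Int.natCast_nonneg l]
  rw [Int.emod_eq_of_lt h0 h1]

lemma rpFevenX (l t j E R : ℕ) (hl : 0 < l) (hR : R < l)
    (heq : (2*j-1)*t = R + l*E) (hE : E % 2 = 0) :
    rpF l t j = (((R+1)/2 : ℕ) : ℤ) := by
  have hmod := emodHelperX l t j E R hl hR heq
  rw [hE] at hmod
  simp only [Nat.cast_zero, mul_zero, add_zero] at hmod
  have hRl : (R:ℤ) < l := by exact_mod_cast hR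
  unfold rpF rF
  rw [hmod, if_pos hRl, abs_of_nonneg (by positivity)]
  omega

lemma rpFoddX (l t j E R : ℕ) (hl : 0 < l) (hR : R < l)
    (heq : (2*j-1)*t = R + l*E) (hE : E % 2 = 1) :
    rpF l t j = (((l - R + 1)/2 : ℕ) : ℤ) := by
  have hmod := emodHelperX l t j E R hl hR heq
  rw [hE] at hmod
  simp only [Nat.cast_one, mul_one] at hmod
  have hRl : (R:ℤ) < l := by exact_mod_cast hR
  unfold rpF rF
  rw [hmod, if_neg (by omega)]
  have habs : |(R:ℤ) + l - 2*l| = (l:ℤ) - R := by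
    rw [abs_of_nonpos (by omega)]; ring
  rw [habs]
  omega

lemma oddMulModTwoX (n q : ℕ) (hn : n % 2 = 1) : (n*q) % 2 = q % 2 := by
  rcases Nat.even_or_odd q with ⟨c, rfl⟩ | ⟨c, rfl⟩
  · have h : n*(c+c) = 2*(n*c) := by ring
    omega
  · have h : n*(2*c+1) = 2*(n*c) + n := by ring
    omega

lemma auxSplitX (n S T D : ℕ) (hn : 3 ≤ n) (hD1 : 1 ≤ D) (hD2 : D ≤ 2*n - 2)
    (h : n*S + D = n*T + 2) :
    (S = T ∧ D = 2) ∨ (S + 1 = T ∧ D = n + 2) := by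
  have hST : S ≤ T := by
    by_contra hc
    push_neg at hc
    have h2 : n*(T+1) ≤ n*S := Nat.mul_le_mul_left n hc
    have h3 : n*(T+1) = n*T + n := by ring
    omega
  obtain ⟨d, rfl⟩ : ∃ d, T = S + d := ⟨T - S, by omega⟩
  have h3 : n*(S+d) = n*S + n*d := by ring
  have hd : n*d + 2 = D := by omega
  have hd1 : d ≤ 1 := by
    by_contra hc
    push_neg at hc
    have h4 : n*2 ≤ n*d := Nat.mul_le_mul_left n (by omega)
    omega
  interval_cases d
  · left; constructor
    · omega
    · have : n*0 = 0 := by ring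
      omega
  · right; constructor
    · omega
    · have : n*1 = n := by ring
      omega

lemma master (m p l t : ℕ) (hm : 1 ≤ m) (hp : 1 ≤ p)
    (hl : l = 4*m*p + 2*p + 1) (ht : t = 4*m*p + 1)
    (j : ℕ) (hj1 : 1 ≤ j) (hj2 : j ≤ (2*m+1)*p) :
    ∃ k : ℕ, 1 ≤ k ∧ k ≤ (2*m+1)*p ∧ rpF l t j = (k:ℤ) ∧
      sigmaF l t j = (-1)^((k-1)/p) ∧
      sigmaF l t j = (if (2*m+1) ∣ (2*j-1) then 1 else (-1)^((2*j-1)/(2*m+1))) := by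
  have hl0 : 0 < l := by omega
  have hn0 : 0 < 2*m+1 := by omega
  have h1 : (2*m+1)*((2*j-1)/(2*m+1)) + (2*j-1)%(2*m+1) = 2*j-1 := Nat.div_add_mod _ _
  set q := (2*j-1)/(2*m+1) with hq
  set u := (2*j-1)%(2*m+1) with hu
  have hun : u < 2*m+1 := Nat.mod_lt _ hn0
  have hq2p : q < 2*p := by
    by_contra hc
    push_neg at hc
    have h2 : (2*m+1)*(2*p) ≤ (2*m+1)*q := Nat.mul_le_mul_left _ hc
    have h3 : (2*m+1)*(2*p) = 2*((2*m+1)*p) := by ring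
    omega
  have hnq2 : ((2*m+1)*q) % 2 = q % 2 := oddMulModTwoX _ _ (by omega)
  have hpar : q % 2 + u % 2 = 1 := by omega
  rcases Nat.eq_zero_or_pos u with hu0 | hu1
  · -- Case A : u = 0, q odd
    obtain ⟨e, he⟩ : ∃ e, q = 2*e+1 := ⟨q/2, by omega⟩
    have heq : (2*j-1)*t = q + l*(2*m*q) := by
      rw [← h1, hu0, Nat.add_zero, hl, ht]; ring
    have hR : q < l := by omega
    have hE2 : (2*m*q) % 2 = 0 := by
      have h2 : 2*m*q = 2*(m*q) := by ring
      omega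
    have hsig : sigmaF l t j = 1 := by
      rw [sigmaHelperX l t j _ _ hl0 hR heq]
      exact Even.neg_one_pow ⟨m*q, by ring⟩
    refine ⟨e+1, by omega, ?_, ?_, ?_, ?_⟩
    · have h2 : 1*p ≤ (2*m+1)*p := Nat.mul_le_mul_right p (by omega)
      omega
    · rw [rpFevenX l t j _ _ hl0 hR heq hE2]
      norm_cast
      omega
    · rw [hsig, Nat.add_sub_cancel, Nat.div_eq_of_lt (by omega), pow_zero]
    · rw [hsig, if_pos ⟨q, by omega⟩]
  rcases Nat.even_or_odd u with ⟨d', hd'⟩ | ⟨d, hd⟩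
  · -- Case C : u even, u ≥ 2, q odd
    obtain ⟨d, hd⟩ : ∃ d, u = 2*d+2 := ⟨d'-1, by omega⟩
    obtain ⟨e, he⟩ : ∃ e, q = 2*e+1 := ⟨q/2, by omega⟩
    obtain ⟨g, hg⟩ : ∃ g, m = d + 1 + g := ⟨m-d-1, by omega⟩
    have hep : e < p := by omega
    have heq : (2*j-1)*t = ((4*g+2)*p + 2*e + 2) + l*(2*m*(2*e+1) + 2*d + 1) := by
      rw [← h1, hd, he, hl, ht, hg]; ring
    have hexp : 4*m*p = 4*(d*p) + 4*(g*p) + 4*p := by rw [hg]; ring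
    have hexp' : (4*g+2)*p = 4*(g*p) + 2*p := by ring
    have hR : (4*g+2)*p + 2*e + 2 < l := by omega
    have hE2 : (2*m*(2*e+1) + 2*d + 1) % 2 = 1 := by
      have h2 : 2*m*(2*e+1) + 2*d + 1 = 2*(m*(2*e+1) + d) + 1 := by ring
      omega
    have hsig : sigmaF l t j = -1 := by
      rw [sigmaHelperX l t j _ _ hl0 hR heq]
      exact Odd.neg_one_pow ⟨m*(2*e+1) + d, by ring⟩
    obtain ⟨f, hf⟩ : ∃ f, e + f + 1 = p := ⟨p - e - 1, by omega⟩
    refine ⟨2*(d*p) + p + f + 1, by omega, ?_, ?_, ?_, ?_⟩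
    · have hexp2 : (2*m+1)*p = 2*(d*p) + 2*(g*p) + 3*p := by rw [hg]; ring
      omega
    · rw [rpFoddX l t j _ _ hl0 hR heq hE2]
      norm_cast
      omega
    · rw [hsig]
      have hdiv : (2*(d*p) + p + f + 1 - 1)/p = 2*d+1 := by
        apply Nat.div_eq_of_lt_le
        · have : (2*d+1)*p = 2*(d*p) + p := by ring
          omega
        · have : (2*d+1+1)*p = 2*(d*p) + 2*p := by ring
          omega
      rw [hdiv]
      exact (Odd.neg_one_pow ⟨d, by ring⟩).symm
    · rw [hsig, if_neg (by rw [Nat.dvd_iff_mod_eq_zero]; omega), he]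
      exact (Odd.neg_one_pow ⟨e, by ring⟩).symm
  · -- Case B : u odd, q even
    obtain ⟨e, he⟩ : ∃ e, q = 2*e := ⟨q/2, by omega⟩
    obtain ⟨g, hg⟩ : ∃ g, m = d + g ∧ 1 ≤ g := ⟨m-d, by omega, by omega⟩
    have hep : e < p := by omega
    have heq : (2*j-1)*t = (4*(g*p) + 2*e + 1) + l*(4*m*e + 2*d) := by
      rw [← h1, hd, he, hl, ht, hg.1]; ring
    have hexp : 4*m*p = 4*(d*p) + 4*(g*p) := by rw [hg.1]; ring
    have hR : 4*(g*p) + 2*e + 1 < l := by omega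
    have hE2 : (4*m*e + 2*d) % 2 = 0 := by
      have h2 : 4*m*e + 2*d = 2*(2*m*e + d) := by ring
      omega
    have hsig : sigmaF l t j = 1 := by
      rw [sigmaHelperX l t j _ _ hl0 hR heq]
      exact Even.neg_one_pow ⟨2*m*e + d, by ring⟩
    refine ⟨2*(g*p) + e + 1, by omega, ?_, ?_, ?_, ?_⟩
    · have hexp2 : (2*m+1)*p = 2*(d*p) + 2*(g*p) + p := by rw [hg.1]; ring
      omega
    · rw [rpFevenX l t j _ _ hl0 hR heq hE2]
      norm_cast
      omega
    · rw [hsig]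
      have hdiv : (2*(g*p) + e + 1 - 1)/p = 2*g := by
        apply Nat.div_eq_of_lt_le
        · have : 2*g*p = 2*(g*p) := by ring
          omega
        · have : (2*g+1)*p = 2*(g*p) + p := by ring
          omega
      rw [hdiv]
      exact (Even.neg_one_pow ⟨g, by ring⟩).symm
    · rw [hsig, if_neg (by rw [Nat.dvd_iff_mod_eq_zero]; omega), he]
      exact (Even.neg_one_pow ⟨e, by ring⟩).symm


theorem stmt9 (m p l t p' : ℕ) (hm : 1 ≤ m) (hp : 1 ≤ p)
    (hl : l = 4*m*p + 2*p + 1) (ht : t = 4*m*p + 1) (hp' : p' = (2*m+1)*p)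
    (I : ℕ → ℕ)
    (hI : ∀ k : ℕ, 1 ≤ k → k ≤ p' → 1 ≤ I k ∧ I k ≤ p' ∧ rpF l t (I k) = (k : ℤ)) :
    (∀ k i : ℕ, 1 ≤ k → k ≤ p' → i % 2 = 0 → i ≤ 2*m →
        i*p + 1 ≤ k → k ≤ (i+1)*p →
        sigmaF l t (I k) + sigmaF l t (I (p' + 1 - k)) = 2) ∧
    (∀ k i : ℕ, 1 ≤ k → k ≤ p' → i % 2 = 1 → i ≤ 2*m - 1 →
        i*p + 1 ≤ k → k ≤ (i+1)*p →
        sigmaF l t (I k) + sigmaF l t (I (p' + 1 - k)) = -2) ∧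
    (∀ j : ℕ, 1 ≤ j → j ≤ p' - 1 →
        sigmaF l t (j+1) + sigmaF l t (p' + 1 - j) =
          if (2*m+1) ∣ j then 2 else 0) := by
  have hp'1 : 1 ≤ p' := by
    have : 0 < (2*m+1)*p := Nat.mul_pos (by omega) hp
    omega
  have hn3 : 3 ≤ 2*m+1 := by omega
  have key : ∀ k i : ℕ, 1 ≤ k → k ≤ p' → i ≤ 2*m → i*p + 1 ≤ k → k ≤ (i+1)*p →
      ∃ i' : ℕ, i + i' = 2*m ∧
      sigmaF l t (I k) + sigmaF l t (I (p' + 1 - k)) = (-1)^i + (-1)^i' := by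
    intro k i hk1 hk2 hi2m hlo hhi
    obtain ⟨i', hi'⟩ : ∃ i', i + i' = 2*m := ⟨2*m - i, by omega⟩
    obtain ⟨hIk1, hIk2, hIkr⟩ := hI k hk1 hk2
    have hk21 : 1 ≤ p' + 1 - k := by omega
    have hk22 : p' + 1 - k ≤ p' := by omega
    obtain ⟨hI21, hI22, hI2r⟩ := hI (p' + 1 - k) hk21 hk22
    obtain ⟨k0, _, _, hrp, hsig, _⟩ :=
      master m p l t hm hp hl ht (I k) hIk1 (by omega)
    have hk0 : k0 = k := by
      have : (k0 : ℤ) = (k : ℤ) := by rw [← hrp, hIkr]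
      exact_mod_cast this
    rw [hk0] at hsig
    obtain ⟨k1, _, _, hrp2, hsig2, _⟩ :=
      master m p l t hm hp hl ht (I (p' + 1 - k)) hI21 (by omega)
    have hk1' : k1 = p' + 1 - k := by
      have : (k1 : ℤ) = ((p' + 1 - k : ℕ) : ℤ) := by rw [← hrp2, hI2r]
      exact_mod_cast this
    rw [hk1'] at hsig2
    have hA : i*p + i'*p + p = p' := by rw [hp', ← hi']; ring
    have hdiv1 : (k - 1)/p = i := by
      apply Nat.div_eq_of_lt_le
      · omega
      · have : (i+1)*p = i*p + p := by ring
        omega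
    have hdiv2 : (p' + 1 - k - 1)/p = i' := by
      have h2 : (i+1)*p = i*p + p := by ring
      have h3 : (i'+1)*p = i'*p + p := by ring
      apply Nat.div_eq_of_lt_le
      · omega
      · omega
    exact ⟨i', hi', by rw [hsig, hsig2, hdiv1, hdiv2]⟩
  refine ⟨?_, ?_, ?_⟩
  · intro k i hk1 hk2 hpar hi2m hlo hhi
    obtain ⟨i', hi', hs⟩ := key k i hk1 hk2 hi2m hlo hhi
    rw [hs, Even.neg_one_pow (Nat.even_iff.mpr hpar),
      Even.neg_one_pow (Nat.even_iff.mpr (by omega))]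
    norm_num
  · intro k i hk1 hk2 hpar hi2m hlo hhi
    obtain ⟨i', hi', hs⟩ := key k i hk1 hk2 (by omega) hlo hhi
    rw [hs, Odd.neg_one_pow (Nat.odd_iff.mpr hpar),
      Odd.neg_one_pow (Nat.odd_iff.mpr (by omega))]
    norm_num
  · intro j hj1 hj2
    obtain ⟨_, _, _, _, _, hs1⟩ :=
      master m p l t hm hp hl ht (j+1) (by omega) (by omega)
    obtain ⟨_, _, _, _, _, hs2⟩ :=
      master m p l t hm hp hl ht (p'+1-j) (by omega) (by omega)
    have ha : 2*(j+1) - 1 = 2*j+1 := by omega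
    have hb : 2*(p'+1-j) - 1 = 2*(p'-j)+1 := by omega
    rw [ha] at hs1
    rw [hb] at hs2
    by_cases hdvd : (2*m+1) ∣ j
    · rw [if_pos hdvd]
      obtain ⟨c, rfl⟩ := hdvd
      have hcp : c < p := by
        by_contra hc
        push_neg at hc
        have h2 : (2*m+1)*p ≤ (2*m+1)*c := Nat.mul_le_mul_left _ hc
        omega
      have hform : 2*((2*m+1)*c)+1 = (2*m+1)*(2*c)+1 := by ring
      have hda : (2*((2*m+1)*c)+1) / (2*m+1) = 2*c := by
        rw [hform, Nat.mul_add_div (by omega), Nat.div_eq_of_lt (by omega), Nat.add_zero]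
      have hma : (2*((2*m+1)*c)+1) % (2*m+1) = 1 := by
        rw [hform, Nat.mul_add_mod, Nat.mod_eq_of_lt (by omega)]
      have hmul : (2*m+1)*(p-c) + (2*m+1)*c = (2*m+1)*p := by
        rw [← Nat.mul_add, Nat.sub_add_cancel (le_of_lt hcp)]
      have hmul2 : (2*m+1)*(2*(p-c)) = 2*((2*m+1)*(p-c)) := by ring
      have hformb : 2*(p'-(2*m+1)*c)+1 = (2*m+1)*(2*(p-c))+1 := by omega
      have hdb : (2*(p'-(2*m+1)*c)+1) / (2*m+1) = 2*(p-c) := by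
        rw [hformb, Nat.mul_add_div (by omega), Nat.div_eq_of_lt (by omega), Nat.add_zero]
      have hmb : (2*(p'-(2*m+1)*c)+1) % (2*m+1) = 1 := by
        rw [hformb, Nat.mul_add_mod, Nat.mod_eq_of_lt (by omega)]
      rw [if_neg (by rw [Nat.dvd_iff_mod_eq_zero]; omega), hda] at hs1
      rw [if_neg (by rw [Nat.dvd_iff_mod_eq_zero]; omega), hdb] at hs2
      rw [hs1, hs2, Even.neg_one_pow ⟨c, by ring⟩, Even.neg_one_pow ⟨p-c, by ring⟩]
      norm_num
    · rw [if_neg hdvd]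
      have h1a : (2*m+1)*((2*j+1)/(2*m+1)) + (2*j+1)%(2*m+1) = 2*j+1 :=
        Nat.div_add_mod _ _
      have h1b : (2*m+1)*((2*(p'-j)+1)/(2*m+1)) + (2*(p'-j)+1)%(2*m+1) = 2*(p'-j)+1 :=
        Nat.div_add_mod _ _
      set qa := (2*j+1)/(2*m+1) with hqa
      set ua := (2*j+1)%(2*m+1) with hua
      set qb := (2*(p'-j)+1)/(2*m+1) with hqb
      set ub := (2*(p'-j)+1)%(2*m+1) with hub
      have huan : ua < 2*m+1 := Nat.mod_lt _ (by omega)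
      have hubn : ub < 2*m+1 := Nat.mod_lt _ (by omega)
      have hpa : qa % 2 + ua % 2 = 1 := by
        have := oddMulModTwoX (2*m+1) qa (by omega)
        omega
      have hpb : qb % 2 + ub % 2 = 1 := by
        have := oddMulModTwoX (2*m+1) qb (by omega)
        omega
      have hnp : (2*m+1)*(2*p) = 2*p' := by rw [hp']; ring
      have hsum : (2*m+1)*(qa+qb) + (ua+ub) = (2*m+1)*(2*p) + 2 := by
        have h2 : (2*m+1)*(qa+qb) = (2*m+1)*qa + (2*m+1)*qb := by ring
        omega
      have huab1 : 1 ≤ ua + ub := by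
        by_contra hc
        push_neg at hc
        have hua0 : ua = 0 := by omega
        have hub0 : ub = 0 := by omega
        rcases le_or_gt (qa+qb) (2*p) with h|h
        · have := Nat.mul_le_mul_left (2*m+1) h
          omega
        · have h' : 2*p+1 ≤ qa+qb := h
          have := Nat.mul_le_mul_left (2*m+1) h'
          have h3 : (2*m+1)*(2*p+1) = (2*m+1)*(2*p) + (2*m+1) := by ring
          omega
      rcases auxSplitX (2*m+1) (qa+qb) (2*p) (ua+ub) hn3 huab1 (by omega) hsum with
        ⟨hS, hD⟩ | ⟨hS, hD⟩
      · -- ua + ub = 2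
        rcases Nat.eq_zero_or_pos ua with hua0 | hua1
        · -- ua = 0, ub = 2
          rw [if_pos ⟨qa, by omega⟩] at hs1
          rw [if_neg (by rw [Nat.dvd_iff_mod_eq_zero]; omega)] at hs2
          rw [hs1, hs2, Odd.neg_one_pow (Nat.odd_iff.mpr (by omega))]
          norm_num
        rcases Nat.eq_zero_or_pos ub with hub0 | hub1
        · -- ub = 0, ua = 2
          rw [if_neg (by rw [Nat.dvd_iff_mod_eq_zero]; omega)] at hs1
          rw [if_pos ⟨qb, by omega⟩] at hs2
          rw [hs1, hs2, Odd.neg_one_pow (Nat.odd_iff.mpr (by omega))]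
          norm_num
        · -- ua = ub = 1 : contradiction
          exfalso
          apply hdvd
          have h2j : j * 2 = (2*m+1)*qa := by omega
          have hcop : Nat.Coprime (2*m+1) 2 :=
            Odd.coprime_two_right ⟨m, by ring⟩
          exact hcop.dvd_of_dvd_mul_right ⟨qa, h2j⟩
      · -- ua + ub = 2*m+3, qa + qb = 2*p - 1
        rw [if_neg (by rw [Nat.dvd_iff_mod_eq_zero]; omega)] at hs1
        rw [if_neg (by rw [Nat.dvd_iff_mod_eq_zero]; omega)] at hs2
        rw [hs1, hs2]
        rcases Nat.even_or_odd qa with hqe | hqe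
        · rw [Even.neg_one_pow hqe, Odd.neg_one_pow (Nat.odd_iff.mpr (by
            have := Nat.even_iff.mp hqe; omega))]
          norm_num
        · rw [Odd.neg_one_pow hqe, Even.neg_one_pow (Nat.even_iff.mpr (by
            have := Nat.odd_iff.mp hqe; omega))]
          norm_num
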